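/- Fix a nonzero real number c and let T be the two-sided Jacobi matrix with ω n = 1/2 and α n = c·n for all n ∈ ℤ, i.e. T e_n = (e_{n+1} + e_{n−1})/√2 + c·n·e_n. Then for every natural number m, ⟨T^m e_0, e_0⟩ = Σ_{n∈ℤ} (c·n)^m |a_n(c)|². -/

import Mathlib

/-- The two-sided Jacobi matrix of sequences `(ω, α)` indexed by `ℤ`, acting on finitely
supported real sequences: `X e_n = √(ω n)·e_{n+1} + α n·e_n + √(ω (n-1))·e_{n-1}`. -/
noncomputable def jacobiOpZ (ω α : ℤ → ℝ) : (ℤ →₀ ℝ) →ₗ[ℝ] (ℤ →₀ ℝ) :=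
  Finsupp.lsum ℝ fun n => LinearMap.toSpanSingleton ℝ (ℤ →₀ ℝ)
    (Real.sqrt (ω n) • Finsupp.single (n + 1) 1 + α n • Finsupp.single n 1 +
      Real.sqrt (ω (n - 1)) • Finsupp.single (n - 1) 1)

/-- `a_n(c)`, the `n`-th Fourier coefficient of `t ↦ exp(i·√2·sin t / c)`. -/
noncomputable def arcsineFourierCoeff (c : ℝ) (n : ℤ) : ℂ :=
  (1 / (2 * Real.pi)) * ∫ t in (0 : ℝ)..(2 * Real.pi),
    Complex.exp (Complex.I * ((Real.sqrt 2 * Real.sin t / c : ℝ) : ℂ)) *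
      Complex.exp (-(Complex.I * (n : ℂ) * (t : ℂ)))

open Complex intervalIntegral Real

lemma jacobi_apply (c : ℝ) (f : ℤ →₀ ℝ) (n : ℤ) :
    (jacobiOpZ (fun _ => 1 / 2) (fun k => c * k) f) n
      = Real.sqrt (1 / 2) * (f (n - 1) + f (n + 1)) + c * n * f n := by
  induction f using Finsupp.induction_linear with
  | zero => simp
  | add f g hf hg =>
    simp only [map_add, Finsupp.add_apply, hf, hg]; ring
  | single j b =>
    rw [jacobiOpZ, Finsupp.lsum_single, LinearMap.toSpanSingleton_apply]
    simp only [Finsupp.smul_apply, Finsupp.add_apply, Finsupp.single_apply, smul_eq_mul]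
    simp only [show (j + 1 = n) ↔ (j = n - 1) by omega, show (j - 1 = n) ↔ (j = n + 1) by omega]
    by_cases h1 : j = n - 1 <;> by_cases h2 : j = n <;> by_cases h3 : j = n + 1 <;>
      simp [h1, h2, h3] <;> split_ifs <;> first | ring | omega

lemma arcsine_norm_le_one (c : ℝ) (n : ℤ) : ‖arcsineFourierCoeff c n‖ ≤ 1 := by
  rw [arcsineFourierCoeff]
  have h : ‖∫ t in (0 : ℝ)..(2 * Real.pi),
      Complex.exp (Complex.I * ((Real.sqrt 2 * Real.sin t / c : ℝ) : ℂ)) *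
        Complex.exp (-(Complex.I * (n : ℂ) * (t : ℂ)))‖ ≤ 1 * |2 * Real.pi - 0| := by
    apply intervalIntegral.norm_integral_le_of_norm_le_const
    intro t _
    rw [norm_mul, Complex.norm_exp, Complex.norm_exp]
    simp [Complex.mul_re]
  rw [norm_mul]
  calc ‖(1 / (2 * (Real.pi : ℂ)))‖ * ‖_‖ ≤ ‖(1 / (2 * (Real.pi : ℂ)))‖ * (1 * |2 * Real.pi - 0|) := by
        apply mul_le_mul_of_nonneg_left h (norm_nonneg _)
    _ = 1 := by
        rw [sub_zero, one_mul, norm_div, norm_one, norm_mul]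
        simp [abs_of_pos Real.pi_pos,
          abs_of_pos Real.pi_pos, mul_comm]
        field_simp

lemma arcsine_eq_E (c : ℝ) (k : ℤ) :
    arcsineFourierCoeff c k = (1 / (2 * Real.pi)) * ∫ t in (0:ℝ)..(2 * Real.pi),
      Complex.exp (Complex.I * ((Real.sqrt 2 / c * Real.sin t : ℝ) : ℂ)
        - Complex.I * (k : ℂ) * (t : ℂ)) := by
  rw [arcsineFourierCoeff]
  congr 1
  apply intervalIntegral.integral_congr
  intro t _
  dsimp only
  rw [← Complex.exp_add]
  congr 1
  have : (Real.sqrt 2 * Real.sin t / c : ℝ) = (Real.sqrt 2 / c * Real.sin t : ℝ) := by ring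
  rw [this]
  ring

lemma contE (x : ℝ) (k : ℤ) :
    Continuous (fun t : ℝ => Complex.exp (Complex.I * ((x * Real.sin t : ℝ) : ℂ)
      - Complex.I * (k : ℂ) * (t : ℂ))) := by
  fun_prop

lemma arcsine_recurrence (c : ℝ) (hc : c ≠ 0) (j : ℤ) :
    arcsineFourierCoeff c (j - 1) + arcsineFourierCoeff c (j + 1)
      = Real.sqrt 2 * c * j * arcsineFourierCoeff c j := by
  set x : ℝ := Real.sqrt 2 / c with hxdef
  set E : ℤ → ℝ → ℂ := fun k t => Complex.exp (Complex.I * ((x * Real.sin t : ℝ) : ℂ)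
    - Complex.I * (k : ℂ) * (t : ℂ)) with hE
  have hEcont : ∀ k : ℤ, Continuous (E k) := fun k => contE x k
  have hInt : ∀ k : ℤ, IntervalIntegrable (E k) MeasureTheory.volume 0 (2 * Real.pi) :=
    fun k => (hEcont k).intervalIntegrable _ _
  -- FTC : the integral of the derivative of E j vanishes over a period
  have hderiv : ∀ t : ℝ, HasDerivAt (E j)
      (E j t * (Complex.I * ((x * Real.cos t : ℝ) : ℂ) - Complex.I * (j : ℂ))) t := by
    intro t
    have h1 : HasDerivAt (fun t : ℝ => ((x * Real.sin t : ℝ) : ℂ))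
        ((x * Real.cos t : ℝ) : ℂ) t :=
      (((Real.hasDerivAt_sin t).const_mul x)).ofReal_comp
    have h1' := h1.const_mul Complex.I
    have h2 : HasDerivAt (fun t : ℝ => ((t : ℝ) : ℂ)) 1 t := Complex.ofRealCLM.hasDerivAt
    have h2' := h2.const_mul (Complex.I * (j : ℂ))
    have h3 : HasDerivAt (fun t : ℝ => Complex.I * ((x * Real.sin t : ℝ) : ℂ)
        - Complex.I * (j : ℂ) * ((t : ℝ) : ℂ))
        (Complex.I * ((x * Real.cos t : ℝ) : ℂ) - Complex.I * (j : ℂ) * 1) t := h1'.sub h2'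
    have h4 := h3.cexp
    simpa [hE, mul_one] using h4
  have hFTC : (∫ t in (0:ℝ)..(2 * Real.pi),
      E j t * (Complex.I * ((x * Real.cos t : ℝ) : ℂ) - Complex.I * (j : ℂ)))
        = E j (2 * Real.pi) - E j 0 := by
    apply intervalIntegral.integral_eq_sub_of_hasDerivAt
    · intro t _; exact hderiv t
    · apply Continuous.intervalIntegrable
      apply (hEcont j).mul
      fun_prop
  have hperiod : E j (2 * Real.pi) - E j 0 = 0 := by
    have h0 : E j 0 = 1 := by simp [hE]
    have h2π : E j (2 * Real.pi) = 1 := by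
      have : Complex.I * ((x * Real.sin (2 * Real.pi) : ℝ) : ℂ)
          - Complex.I * (j : ℂ) * ((2 * Real.pi : ℝ) : ℂ) = (-j : ℤ) * (2 * Real.pi * Complex.I) := by
        rw [Real.sin_two_pi]
        push_cast
        ring
      rw [hE]
      simp only []
      rw [this, Complex.exp_int_mul_two_pi_mul_I]
    rw [h0, h2π, sub_self]
  -- pointwise expansion of the integrand
  have hpoint : ∀ t : ℝ, E j t * (Complex.I * ((x * Real.cos t : ℝ) : ℂ) - Complex.I * (j : ℂ))
      = (Complex.I * x / 2) * E (j - 1) t + (Complex.I * x / 2) * E (j + 1) t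
        - Complex.I * (j : ℂ) * E j t := by
    intro t
    have hm : E (j - 1) t = E j t * Complex.exp (Complex.I * (t : ℂ)) := by
      rw [hE]; simp only []
      rw [← Complex.exp_add]
      congr 1
      push_cast
      ring
    have hp : E (j + 1) t = E j t * Complex.exp (-(Complex.I * (t : ℂ))) := by
      rw [hE]; simp only []
      rw [← Complex.exp_add]
      congr 1
      push_cast
      ring
    have hcos : Complex.exp (Complex.I * (t : ℂ)) + Complex.exp (-(Complex.I * (t : ℂ)))
        = 2 * ((Real.cos t : ℝ) : ℂ) := by
      rw [show Complex.I * (t : ℂ) = (t : ℂ) * Complex.I by ring,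
        show -((t : ℂ) * Complex.I) = (-(t : ℂ)) * Complex.I by ring,
        Complex.exp_mul_I, Complex.exp_mul_I, Complex.cos_neg, Complex.sin_neg,
        Complex.ofReal_cos]
      ring
    rw [hm, hp]
    have expand : (Complex.I * x / 2) * (E j t * Complex.exp (Complex.I * (t : ℂ)))
        + (Complex.I * x / 2) * (E j t * Complex.exp (-(Complex.I * (t : ℂ))))
        - Complex.I * (j : ℂ) * E j t
        = E j t * ((Complex.I * x / 2) * (Complex.exp (Complex.I * (t : ℂ))
            + Complex.exp (-(Complex.I * (t : ℂ)))) - Complex.I * (j : ℂ)) := by ring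
    rw [expand, hcos]
    push_cast
    ring
  -- integrate
  have hsplit : (∫ t in (0:ℝ)..(2 * Real.pi),
      E j t * (Complex.I * ((x * Real.cos t : ℝ) : ℂ) - Complex.I * (j : ℂ)))
      = (Complex.I * x / 2) * (∫ t in (0:ℝ)..(2 * Real.pi), E (j - 1) t)
        + (Complex.I * x / 2) * (∫ t in (0:ℝ)..(2 * Real.pi), E (j + 1) t)
        - Complex.I * (j : ℂ) * (∫ t in (0:ℝ)..(2 * Real.pi), E j t) := by
    rw [intervalIntegral.integral_congr (fun t _ => hpoint t)]
    rw [intervalIntegral.integral_sub (((hInt (j-1)).const_mul _).add ((hInt (j+1)).const_mul _))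
      ((hInt j).const_mul _)]
    rw [intervalIntegral.integral_add ((hInt (j-1)).const_mul _) ((hInt (j+1)).const_mul _)]
    rw [intervalIntegral.integral_const_mul, intervalIntegral.integral_const_mul,
      intervalIntegral.integral_const_mul]
  have key : (Complex.I * x / 2) * (∫ t in (0:ℝ)..(2 * Real.pi), E (j - 1) t)
        + (Complex.I * x / 2) * (∫ t in (0:ℝ)..(2 * Real.pi), E (j + 1) t)
        - Complex.I * (j : ℂ) * (∫ t in (0:ℝ)..(2 * Real.pi), E j t) = 0 := by
    rw [← hsplit, hFTC, hperiod]
  -- translate to arcsineFourierCoeff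
  have ha : ∀ k : ℤ, arcsineFourierCoeff c k
      = (1 / (2 * Real.pi)) * ∫ t in (0:ℝ)..(2 * Real.pi), E k t := fun k => arcsine_eq_E c k
  rw [ha, ha, ha]
  set I0 := ∫ t in (0:ℝ)..(2 * Real.pi), E j t
  set I1 := ∫ t in (0:ℝ)..(2 * Real.pi), E (j - 1) t
  set I2 := ∫ t in (0:ℝ)..(2 * Real.pi), E (j + 1) t
  have h2 : (Real.sqrt 2 : ℂ) ≠ 0 := by
    simp [Real.sqrt_eq_zero']
  have hcc : (c : ℂ) ≠ 0 := Complex.ofReal_ne_zero.mpr hc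
  have hxc : (x : ℂ) * (c : ℂ) = (Real.sqrt 2 : ℂ) := by
    rw [hxdef]
    push_cast
    field_simp
  -- from key : I*x/2 * (I1 + I2) = I*j*I0 ; conclude I1 + I2 = √2 c j I0
  have hIne : Complex.I * (x : ℂ) ≠ 0 := by
    apply mul_ne_zero Complex.I_ne_zero
    rw [hxdef]; push_cast
    exact div_ne_zero h2 hcc
  have hmain : I1 + I2 = (Real.sqrt 2 : ℂ) * (c : ℂ) * (j : ℂ) * I0 := by
    have hx0 : (x : ℂ) ≠ 0 := by
      rw [hxdef]; push_cast; exact div_ne_zero h2 hcc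
    have hs2 : (Real.sqrt 2 : ℂ) * (Real.sqrt 2 : ℂ) = 2 := by
      rw [← Complex.ofReal_mul, Real.mul_self_sqrt (by norm_num : (0:ℝ) ≤ 2)]
      norm_num
    have hxI : (x : ℂ) * (I1 + I2) = 2 * ((j : ℂ) * I0) :=
      mul_left_cancel₀ Complex.I_ne_zero (by linear_combination 2 * key)
    apply mul_left_cancel₀ hx0
    rw [hxI]
    linear_combination (-(j : ℂ) * I0 * (Real.sqrt 2 : ℂ)) * hxc + (-(j : ℂ) * I0) * hs2
  push_cast
  linear_combination (1 / (2 * (Real.pi : ℂ))) * hmain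

lemma arcsine_decay (c : ℝ) (hc : c ≠ 0) (m : ℕ) :
    ∃ A : ℝ, 0 ≤ A ∧ ∀ k : ℤ,
      ‖arcsineFourierCoeff c k‖ * (1 + |(k : ℝ)|) ^ m ≤ A := by
  induction m with
  | zero =>
    exact ⟨1, zero_le_one, fun k => by
      simpa using arcsine_norm_le_one c k⟩
  | succ m ih =>
    obtain ⟨A, hA0, hA⟩ := ih
    have hs : (0:ℝ) < Real.sqrt 2 * |c| :=
      mul_pos (Real.sqrt_pos.mpr (by norm_num)) (abs_pos.mpr hc)
    refine ⟨max (2 ^ (m + 1)) (2 ^ (m + 2) * A / (Real.sqrt 2 * |c|)),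
      le_trans (by positivity : (0:ℝ) ≤ 2 ^ (m + 1)) (le_max_left _ _), fun k => ?_⟩
    by_cases hk : k = 0
    · subst hk
      refine le_trans ?_ (le_max_left _ _)
      have h1 : ‖arcsineFourierCoeff c 0‖ * (1 + |((0:ℤ) : ℝ)|) ^ (m + 1) ≤ 1 := by
        simpa using arcsine_norm_le_one c 0
      exact h1.trans (one_le_pow₀ (by norm_num : (1:ℝ) ≤ 2))
    · refine le_trans ?_ (le_max_right _ _)
      rw [le_div_iff₀ hs]
      set u := ‖arcsineFourierCoeff c k‖ with hu
      set v := ‖arcsineFourierCoeff c (k - 1)‖ with hv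
      set w := ‖arcsineFourierCoeff c (k + 1)‖ with hw
      set r := |(k : ℝ)| with hr
      have hr1 : (1:ℝ) ≤ r := by
        rw [hr, ← Int.cast_abs]
        exact_mod_cast Int.one_le_abs (by omega)
      have hrec : Real.sqrt 2 * |c| * r * u ≤ v + w := by
        have h := arcsine_recurrence c hc k
        have hnorm : ‖(Real.sqrt 2 : ℂ) * (c : ℂ) * (k : ℂ) * arcsineFourierCoeff c k‖
            = Real.sqrt 2 * |c| * r * u := by
          rw [norm_mul, norm_mul, norm_mul]
          congr 1
          · congr 1
            · congr 1
              · rw [Complex.norm_real, Real.norm_eq_abs,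
                  _root_.abs_of_nonneg (Real.sqrt_nonneg 2)]
              · simp
            · rw [hr]
              simp
        calc Real.sqrt 2 * |c| * r * u = ‖(Real.sqrt 2 : ℂ) * (c : ℂ) * (k : ℂ)
              * arcsineFourierCoeff c k‖ := hnorm.symm
          _ = ‖arcsineFourierCoeff c (k - 1) + arcsineFourierCoeff c (k + 1)‖ := by rw [h]
          _ ≤ v + w := norm_add_le _ _
      have hvA : v * (1 + |((k : ℝ) - 1)|) ^ m ≤ A := by
        have := hA (k - 1); rw [← hv] at this; push_cast at this; exact this
      have hwA : w * (1 + |((k : ℝ) + 1)|) ^ m ≤ A := by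
        have := hA (k + 1); rw [← hw] at this; push_cast at this; exact this
      have hmono1 : (1 + r) ≤ 2 * (1 + |((k : ℝ) - 1)|) := by
        have := abs_sub_abs_le_abs_sub (k : ℝ) 1
        rw [abs_one] at this
        rw [hr] at *
        nlinarith [abs_nonneg ((k:ℝ) - 1)]
      have hmono2 : (1 + r) ≤ 2 * (1 + |((k : ℝ) + 1)|) := by
        have := abs_sub_abs_le_abs_sub (k : ℝ) (-1)
        rw [abs_neg, abs_one, sub_neg_eq_add] at this
        rw [hr] at *
        nlinarith [abs_nonneg ((k:ℝ) + 1)]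
      have hp1 : (1 + r) ^ m ≤ 2 ^ m * (1 + |((k : ℝ) - 1)|) ^ m := by
        rw [← mul_pow]
        exact pow_le_pow_left₀ (by positivity) hmono1 m
      have hp2 : (1 + r) ^ m ≤ 2 ^ m * (1 + |((k : ℝ) + 1)|) ^ m := by
        rw [← mul_pow]
        exact pow_le_pow_left₀ (by positivity) hmono2 m
      have hu0 : 0 ≤ u := norm_nonneg _
      have hv0 : 0 ≤ v := norm_nonneg _
      have hw0 : 0 ≤ w := norm_nonneg _
      have hP0 : (0:ℝ) ≤ (1 + r) ^ m := by positivity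
      have step1 : u * (1 + r) ^ (m + 1) * (Real.sqrt 2 * |c|)
          ≤ 2 * ((v + w) * (1 + r) ^ m) := by
        have h1r : (1 + r) ≤ 2 * r := by linarith
        have e : u * (1 + r) ^ (m + 1) * (Real.sqrt 2 * |c|)
            = (Real.sqrt 2 * |c| * u * (1 + r) ^ m) * (1 + r) := by
          rw [pow_succ]; ring
        rw [e]
        calc (Real.sqrt 2 * |c| * u * (1 + r) ^ m) * (1 + r)
            ≤ (Real.sqrt 2 * |c| * u * (1 + r) ^ m) * (2 * r) := by
              apply mul_le_mul_of_nonneg_left h1r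
              positivity
          _ = 2 * ((Real.sqrt 2 * |c| * r * u) * (1 + r) ^ m) := by ring
          _ ≤ 2 * ((v + w) * (1 + r) ^ m) := by
              apply mul_le_mul_of_nonneg_left _ (by norm_num)
              exact mul_le_mul_of_nonneg_right hrec hP0
      have step2 : 2 * ((v + w) * (1 + r) ^ m) ≤ 2 ^ (m + 2) * A := by
        have e1 : 2 * ((v + w) * (1 + r) ^ m)
            = 2 * (v * (1 + r) ^ m) + 2 * (w * (1 + r) ^ m) := by ring
        have b1 : v * (1 + r) ^ m ≤ 2 ^ m * (v * (1 + |((k : ℝ) - 1)|) ^ m) := by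
          calc v * (1 + r) ^ m ≤ v * (2 ^ m * (1 + |((k : ℝ) - 1)|) ^ m) :=
                mul_le_mul_of_nonneg_left hp1 hv0
            _ = 2 ^ m * (v * (1 + |((k : ℝ) - 1)|) ^ m) := by ring
        have b2 : w * (1 + r) ^ m ≤ 2 ^ m * (w * (1 + |((k : ℝ) + 1)|) ^ m) := by
          calc w * (1 + r) ^ m ≤ w * (2 ^ m * (1 + |((k : ℝ) + 1)|) ^ m) :=
                mul_le_mul_of_nonneg_left hp2 hw0
            _ = 2 ^ m * (w * (1 + |((k : ℝ) + 1)|) ^ m) := by ring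
        have b1' : 2 ^ m * (v * (1 + |((k : ℝ) - 1)|) ^ m) ≤ 2 ^ m * A :=
          mul_le_mul_of_nonneg_left hvA (by positivity)
        have b2' : 2 ^ m * (w * (1 + |((k : ℝ) + 1)|) ^ m) ≤ 2 ^ m * A :=
          mul_le_mul_of_nonneg_left hwA (by positivity)
        have : (2:ℝ) ^ (m + 2) = 2 * (2 ^ m) + 2 * (2 ^ m) := by ring
        rw [this, e1]
        nlinarith [b1, b2, b1', b2']
      linarith [step1, step2]

lemma summable_inv_one_add_abs_sq :
    Summable (fun k : ℤ => ((1 + |(k : ℝ)|) ^ 2)⁻¹) := by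
  have hnat : Summable (fun n : ℕ => ((1 + (n : ℝ)) ^ 2)⁻¹) := by
    have h0 : Summable (fun n : ℕ => ((n : ℝ) ^ 2)⁻¹) := by
      simpa [one_div] using Real.summable_one_div_nat_pow.mpr (by norm_num : 1 < 2)
    have := (summable_nat_add_iff (f := fun n : ℕ => ((n : ℝ) ^ 2)⁻¹) 1).mpr h0
    refine this.congr fun n => ?_
    push_cast
    ring_nf
  apply Summable.of_nat_of_neg
  · refine hnat.congr fun n => ?_
    simp
  · refine hnat.congr fun n => ?_
    simp

lemma arcsine_summable_norm (c : ℝ) (hc : c ≠ 0) (m : ℕ) (n : ℤ) :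
    Summable (fun k : ℤ =>
      |c * (k : ℝ)| ^ m * ‖arcsineFourierCoeff c k‖ * ‖arcsineFourierCoeff c (k - n)‖) := by
  obtain ⟨A, hA0, hA⟩ := arcsine_decay c hc (m + 2)
  apply Summable.of_nonneg_of_le (fun k => by positivity)
    (fun k => ?_) (summable_inv_one_add_abs_sq.mul_left (|c| ^ m * A))
  have hpos : (0:ℝ) < (1 + |(k : ℝ)|) ^ 2 := by positivity
  rw [show |c| ^ m * A * ((1 + |(k : ℝ)|) ^ 2)⁻¹ = |c| ^ m * A / ((1 + |(k : ℝ)|) ^ 2) by ring,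
    le_div_iff₀ hpos]
  have hA' : ‖arcsineFourierCoeff c k‖ * (1 + |(k : ℝ)|) ^ (m + 2) ≤ A := hA k
  calc |c * (k : ℝ)| ^ m * ‖arcsineFourierCoeff c k‖ * ‖arcsineFourierCoeff c (k - n)‖
        * (1 + |(k : ℝ)|) ^ 2
      = |c| ^ m * |(k : ℝ)| ^ m * ‖arcsineFourierCoeff c k‖
        * ‖arcsineFourierCoeff c (k - n)‖ * (1 + |(k : ℝ)|) ^ 2 := by
        rw [abs_mul, mul_pow]
    _ ≤ |c| ^ m * (1 + |(k : ℝ)|) ^ m * ‖arcsineFourierCoeff c k‖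
        * 1 * (1 + |(k : ℝ)|) ^ 2 := by
        gcongr
        · linarith [abs_nonneg (k : ℝ)]
        · exact arcsine_norm_le_one c (k - n)
    _ = |c| ^ m * (‖arcsineFourierCoeff c k‖ * (1 + |(k : ℝ)|) ^ (m + 2)) := by
        rw [pow_add]; ring
    _ ≤ |c| ^ m * A := mul_le_mul_of_nonneg_left hA' (by positivity)

open MeasureTheory AddCircle in
lemma arcsine_parseval (c : ℝ) (n : ℤ) :
    ∑' k : ℤ, (starRingEnd ℂ) (arcsineFourierCoeff c k) * arcsineFourierCoeff c (k - n)
      = if n = 0 then 1 else 0 := by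
  haveI : Fact (0 < 2 * Real.pi) := ⟨by positivity⟩
  set g : ℝ → ℂ := fun t => Complex.exp (Complex.I * ((Real.sqrt 2 * Real.sin t / c : ℝ) : ℂ))
    with hg
  have hper : Function.Periodic g (2 * Real.pi) := by
    intro t
    simp only [hg, Real.sin_add, Real.sin_two_pi, Real.cos_two_pi]
    norm_num
  set G : AddCircle (2 * Real.pi) → ℂ := hper.lift with hGdef
  have hGcoe : ∀ t : ℝ, G (t : AddCircle (2 * Real.pi)) = g t := fun t => hper.lift_coe t
  have hgcont : Continuous g := by fun_prop
  have hGcont : Continuous G := hgcont.quotient_liftOn' _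
  have hGnorm : ∀ z, ‖G z‖ = 1 := by
    intro z
    induction z using QuotientAddGroup.induction_on with
    | H t =>
      rw [hGcoe t, hg]
      simp only []
      rw [Complex.norm_exp]
      simp [Complex.mul_re]
  -- Fourier coefficients of G are the arcsine coefficients
  have hcoeff : ∀ j : ℤ, fourierCoeff G j = arcsineFourierCoeff c j := by
    intro j
    rw [fourierCoeff_eq_intervalIntegral G j 0, zero_add, arcsineFourierCoeff]
    rw [Complex.real_smul, Complex.ofReal_div, Complex.ofReal_one, Complex.ofReal_mul,
      Complex.ofReal_ofNat]
    congr 1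
    apply intervalIntegral.integral_congr
    intro t _
    dsimp only
    have hfour : (fourier (-j) (t : AddCircle (2 * Real.pi)) : ℂ)
        = Complex.exp (-(Complex.I * (j : ℂ) * (t : ℂ))) := by
      rw [fourier_coe_apply]
      congr 1
      have hπ : (Real.pi : ℂ) ≠ 0 := Complex.ofReal_ne_zero.mpr Real.pi_ne_zero
      push_cast
      field_simp
    rw [smul_eq_mul, hfour, hGcoe t, hg]
    ring
  have hcoeff2 : ∀ j : ℤ, fourierCoeff (fun z => fourier n z * G z) j
      = arcsineFourierCoeff c (j - n) := by
    intro j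
    rw [← hcoeff (j - n), fourierCoeff, fourierCoeff]
    apply MeasureTheory.integral_congr_ae
    apply Filter.Eventually.of_forall
    intro t
    dsimp only
    rw [smul_eq_mul, smul_eq_mul, ← mul_assoc, ← fourier_add,
      show -j + n = -(j - n) by ring]
  -- L² membership
  have hm1 : MemLp G 2 haarAddCircle :=
    MemLp.of_bound hGcont.aestronglyMeasurable 1
      (Filter.Eventually.of_forall fun z => le_of_eq (hGnorm z))
  have hm2 : MemLp (fun z => fourier n z * G z) 2 haarAddCircle := by
    apply MemLp.of_bound (((fourier n).continuous.mul hGcont).aestronglyMeasurable) 1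
    apply Filter.Eventually.of_forall
    intro z
    rw [Pi.mul_apply, norm_mul, hGnorm z, mul_one]
    exact le_of_eq (Circle.norm_coe _)
  set F₁ := hm1.toLp G with hF₁
  set F₂ := hm2.toLp _ with hF₂
  have hrepr1 : ∀ i : ℤ, fourierBasis.repr F₁ i = arcsineFourierCoeff c i := by
    intro i
    rw [fourierBasis_repr, ← hcoeff i, fourierCoeff, fourierCoeff]
    apply MeasureTheory.integral_congr_ae
    filter_upwards [hm1.coeFn_toLp] with t ht
    rw [ht]
  have hrepr2 : ∀ i : ℤ, fourierBasis.repr F₂ i = arcsineFourierCoeff c (i - n) := by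
    intro i
    rw [fourierBasis_repr, ← hcoeff2 i, fourierCoeff, fourierCoeff]
    apply MeasureTheory.integral_congr_ae
    filter_upwards [hm2.coeFn_toLp] with t ht
    rw [ht]
  have hinner1 : (inner ℂ F₁ F₂ : ℂ)
      = ∑' i : ℤ, (starRingEnd ℂ) (arcsineFourierCoeff c i) * arcsineFourierCoeff c (i - n) := by
    rw [← (fourierBasis (T := 2 * Real.pi)).repr.inner_map_map F₁ F₂, lp.inner_eq_tsum]
    congr 1
    funext i
    rw [RCLike.inner_apply', hrepr1 i, hrepr2 i]
  have hinner2 : (inner ℂ F₁ F₂ : ℂ) = ∫ z : AddCircle (2 * Real.pi), (fourier n z : ℂ) ∂haarAddCircle := by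
    rw [MeasureTheory.L2.inner_def]
    have : ∀ᵐ z ∂(haarAddCircle : MeasureTheory.Measure (AddCircle (2 * Real.pi))), (inner ℂ (F₁ z) (F₂ z) : ℂ) = fourier n z := by
      filter_upwards [hm1.coeFn_toLp, hm2.coeFn_toLp] with z h1 h2
      rw [RCLike.inner_apply', h1, h2]
      have hGz : (starRingEnd ℂ) (G z) * G z = 1 := by
        have := Complex.normSq_eq_norm_sq (G z)
        rw [hGnorm z] at this
        rw [mul_comm, Complex.mul_conj, this]
        norm_num
      calc (starRingEnd ℂ) (G z) * (fourier n z * G z)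
          = fourier n z * ((starRingEnd ℂ) (G z) * G z) := by ring
        _ = fourier n z := by rw [hGz, mul_one]
    rw [MeasureTheory.integral_congr_ae this]
  have hfourier_int : (∫ z, fourier n z ∂(haarAddCircle : Measure (AddCircle (2 * Real.pi))))
      = if n = 0 then 1 else 0 := by
    have h1 : (∫ z, fourier n z ∂(haarAddCircle : Measure (AddCircle (2 * Real.pi))))
        = fourierCoeff (fun _ : AddCircle (2 * Real.pi) => (1:ℂ)) (-n) := by
      rw [fourierCoeff]
      simp [smul_eq_mul]
    rw [h1, fourierCoeff_eq_intervalIntegral _ (-n) 0, zero_add]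
    by_cases hn : n = 0
    · subst hn
      simp only [neg_zero, neg_neg, fourier_zero, smul_eq_mul, mul_one, if_true]
      rw [_root_.intervalIntegral.integral_const]
      have hπ : (Real.pi : ℂ) ≠ 0 := Complex.ofReal_ne_zero.mpr Real.pi_ne_zero
      rw [smul_smul, sub_zero, one_div, inv_mul_cancel₀ (by positivity), one_smul]
    · rw [if_neg hn]
      have : (∫ x in (0:ℝ)..(2 * Real.pi),
          fourier (- -n) (x : AddCircle (2 * Real.pi)) • (1:ℂ)) = 0 := by
        have heq : ∀ x : ℝ, fourier (- -n) (x : AddCircle (2 * Real.pi)) • (1:ℂ)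
            = Complex.exp ((Complex.I * n) * x) := by
          intro x
          rw [smul_eq_mul, mul_one, neg_neg, fourier_coe_apply]
          congr 1
          have hπ : (Real.pi : ℂ) ≠ 0 := Complex.ofReal_ne_zero.mpr Real.pi_ne_zero
          field_simp
          push_cast
          ring
        rw [_root_.intervalIntegral.integral_congr (fun x _ => heq x)]
        rw [integral_exp_mul_complex
          (mul_ne_zero Complex.I_ne_zero (Int.cast_ne_zero.mpr hn))]
        rw [show (Complex.I * n) * ((2 * Real.pi : ℝ) : ℂ) = n * (2 * Real.pi * Complex.I) by
          push_cast; ring]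
        rw [Complex.exp_int_mul_two_pi_mul_I]
        simp
      rw [this, smul_zero]
  rw [← hinner1, hinner2, hfourier_int]

noncomputable def arcsineS (c : ℝ) (m : ℕ) (n : ℤ) : ℂ :=
  ∑' k : ℤ, (((c * (k : ℝ)) ^ m : ℝ) : ℂ) * (starRingEnd ℂ) (arcsineFourierCoeff c k)
    * arcsineFourierCoeff c (k - n)

lemma summable_term (c : ℝ) (hc : c ≠ 0) (m : ℕ) (n : ℤ) :
    Summable (fun k : ℤ => (((c * (k : ℝ)) ^ m : ℝ) : ℂ)
      * (starRingEnd ℂ) (arcsineFourierCoeff c k) * arcsineFourierCoeff c (k - n)) := by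
  refine Summable.of_norm ((arcsine_summable_norm c hc m n).congr fun k => ?_)
  rw [norm_mul, norm_mul, Complex.norm_real, Real.norm_eq_abs, _root_.abs_pow, RCLike.norm_conj]

lemma S_parseval (c : ℝ) (n : ℤ) : arcsineS c 0 n = if n = 0 then 1 else 0 := by
  rw [arcsineS, ← arcsine_parseval c n]
  apply tsum_congr
  intro k
  rw [pow_zero, Complex.ofReal_one, one_mul]

lemma S_step (c : ℝ) (hc : c ≠ 0) (m : ℕ) (n : ℤ) :
    arcsineS c (m + 1) n
      = ((Real.sqrt (1 / 2) : ℝ) : ℂ) * (arcsineS c m (n - 1) + arcsineS c m (n + 1))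
        + ((c * (n : ℝ) : ℝ) : ℂ) * arcsineS c m n := by
  have h12 : ((Real.sqrt (1 / 2) : ℝ) : ℂ) * ((Real.sqrt 2 : ℝ) : ℂ) = 1 := by
    rw [← Complex.ofReal_mul, ← Real.sqrt_mul (by norm_num : (0:ℝ) ≤ 1/2)]
    norm_num
  have hpt : ∀ k : ℤ, (((c * (k : ℝ)) ^ (m + 1) : ℝ) : ℂ)
        * (starRingEnd ℂ) (arcsineFourierCoeff c k) * arcsineFourierCoeff c (k - n)
      = ((Real.sqrt (1 / 2) : ℝ) : ℂ) * ((((c * (k : ℝ)) ^ m : ℝ) : ℂ)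
          * (starRingEnd ℂ) (arcsineFourierCoeff c k) * arcsineFourierCoeff c (k - (n + 1)))
        + ((Real.sqrt (1 / 2) : ℝ) : ℂ) * ((((c * (k : ℝ)) ^ m : ℝ) : ℂ)
          * (starRingEnd ℂ) (arcsineFourierCoeff c k) * arcsineFourierCoeff c (k - (n - 1)))
        + ((c * (n : ℝ) : ℝ) : ℂ) * ((((c * (k : ℝ)) ^ m : ℝ) : ℂ)
          * (starRingEnd ℂ) (arcsineFourierCoeff c k) * arcsineFourierCoeff c (k - n)) := by
    intro k
    have hrec := arcsine_recurrence c hc (k - n)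
    rw [show k - n - 1 = k - (n + 1) by ring, show k - n + 1 = k - (n - 1) by ring] at hrec
    push_cast at hrec ⊢
    linear_combination
      (-(((Real.sqrt (1 / 2) : ℝ) : ℂ)) * ((c : ℂ) * (k : ℂ)) ^ m
          * (starRingEnd ℂ) (arcsineFourierCoeff c k)) * hrec
      + (-(((c : ℂ) * (k : ℂ)) ^ m * (starRingEnd ℂ) (arcsineFourierCoeff c k)
          * arcsineFourierCoeff c (k - n) * (c : ℂ) * ((k : ℂ) - (n : ℂ)))) * h12
  have h1 := (summable_term c hc m (n + 1)).mul_left ((Real.sqrt (1 / 2) : ℝ) : ℂ)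
  have h2 := (summable_term c hc m (n - 1)).mul_left ((Real.sqrt (1 / 2) : ℝ) : ℂ)
  have h3 := (summable_term c hc m n).mul_left ((c * (n : ℝ) : ℝ) : ℂ)
  calc arcsineS c (m + 1) n
      = ∑' k : ℤ, (((Real.sqrt (1 / 2) : ℝ) : ℂ) * ((((c * (k : ℝ)) ^ m : ℝ) : ℂ)
          * (starRingEnd ℂ) (arcsineFourierCoeff c k) * arcsineFourierCoeff c (k - (n + 1)))
        + ((Real.sqrt (1 / 2) : ℝ) : ℂ) * ((((c * (k : ℝ)) ^ m : ℝ) : ℂ)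
          * (starRingEnd ℂ) (arcsineFourierCoeff c k) * arcsineFourierCoeff c (k - (n - 1)))
        + ((c * (n : ℝ) : ℝ) : ℂ) * ((((c * (k : ℝ)) ^ m : ℝ) : ℂ)
          * (starRingEnd ℂ) (arcsineFourierCoeff c k) * arcsineFourierCoeff c (k - n))) :=
        tsum_congr hpt
    _ = (∑' k : ℤ, (((Real.sqrt (1 / 2) : ℝ) : ℂ) * ((((c * (k : ℝ)) ^ m : ℝ) : ℂ)
          * (starRingEnd ℂ) (arcsineFourierCoeff c k) * arcsineFourierCoeff c (k - (n + 1)))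
        + ((Real.sqrt (1 / 2) : ℝ) : ℂ) * ((((c * (k : ℝ)) ^ m : ℝ) : ℂ)
          * (starRingEnd ℂ) (arcsineFourierCoeff c k) * arcsineFourierCoeff c (k - (n - 1)))))
        + ∑' k : ℤ, ((c * (n : ℝ) : ℝ) : ℂ) * ((((c * (k : ℝ)) ^ m : ℝ) : ℂ)
          * (starRingEnd ℂ) (arcsineFourierCoeff c k) * arcsineFourierCoeff c (k - n)) :=
        Summable.tsum_add (h1.add h2) h3
    _ = (∑' k : ℤ, ((Real.sqrt (1 / 2) : ℝ) : ℂ) * ((((c * (k : ℝ)) ^ m : ℝ) : ℂ)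
          * (starRingEnd ℂ) (arcsineFourierCoeff c k) * arcsineFourierCoeff c (k - (n + 1))))
        + (∑' k : ℤ, ((Real.sqrt (1 / 2) : ℝ) : ℂ) * ((((c * (k : ℝ)) ^ m : ℝ) : ℂ)
          * (starRingEnd ℂ) (arcsineFourierCoeff c k) * arcsineFourierCoeff c (k - (n - 1))))
        + ∑' k : ℤ, ((c * (n : ℝ) : ℝ) : ℂ) * ((((c * (k : ℝ)) ^ m : ℝ) : ℂ)
          * (starRingEnd ℂ) (arcsineFourierCoeff c k) * arcsineFourierCoeff c (k - n)) := by
        rw [Summable.tsum_add h1 h2]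
    _ = ((Real.sqrt (1 / 2) : ℝ) : ℂ) * (arcsineS c m (n - 1) + arcsineS c m (n + 1))
        + ((c * (n : ℝ) : ℝ) : ℂ) * arcsineS c m n := by
        rw [tsum_mul_left, tsum_mul_left, tsum_mul_left, arcsineS, arcsineS, arcsineS]
        ring

lemma jacobi_S (c : ℝ) (hc : c ≠ 0) : ∀ (m : ℕ) (n : ℤ),
    ((((jacobiOpZ (fun _ => 1 / 2) (fun k => c * k)) ^ m) (Finsupp.single (0 : ℤ) 1)) n : ℂ)
      = arcsineS c m n := by
  intro m
  induction m with
  | zero =>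
    intro n
    rw [pow_zero, Module.End.one_apply, S_parseval c n, Finsupp.single_apply]
    by_cases h : n = 0
    · subst h; simp
    · rw [if_neg h, if_neg (fun hh => h hh.symm)]
      norm_num
  | succ m ih =>
    intro n
    rw [pow_succ', Module.End.mul_apply, jacobi_apply]
    push_cast
    rw [ih (n - 1), ih (n + 1), ih n, S_step c hc m n]
    push_cast
    ring

/-- The moments at `⟨· e_0, e_0⟩` of the two-sided Jacobi matrix with `ω ≡ 1/2` and
`α n = c·n` are the moments of the discrete arcsine law `μ_c`. -/
theorem twoSided_jacobi_moments_discrete_arcsine (c : ℝ) (hc : c ≠ 0) (m : ℕ) :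
    ((jacobiOpZ (fun _ => 1 / 2) (fun n => c * n) ^ m) (Finsupp.single (0 : ℤ) 1)) 0 =
      ∑' n : ℤ, (c * (n : ℝ)) ^ m * ‖arcsineFourierCoeff c n‖ ^ 2 := by
  apply Complex.ofReal_injective
  rw [jacobi_S c hc m 0, Complex.ofReal_tsum, arcsineS]
  apply tsum_congr
  intro k
  rw [sub_zero, Complex.ofReal_mul, mul_assoc]
  congr 1
  rw [mul_comm ((starRingEnd ℂ) _), Complex.mul_conj, Complex.normSq_eq_norm_sq]
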